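/- Let b ∈ ℝ with −3/4 < b < 0 and let F = F_{−1,b}. Then (−b−2, −1) is a periodic point of F of minimal period 5. If moreover −1/8 ≤ b, then (b, −1) is a periodic point of F of minimal period 7. -/
import Mathlib

/-- The piecewise linear map `F_{a,b}(x,y) = (|x| - y + a, x - |y| + b)`. -/
noncomputable def F (a b : ℝ) : ℝ × ℝ → ℝ × ℝ :=
  fun p => (|p.1| - p.2 + a, p.1 - |p.2| + b)

lemma minPeriod_prime {α : Type*} {f : α → α} {p : α} {n : ℕ} (hn : n.Prime)
    (h : f^[n] p = p) (h1 : f p ≠ p) : Function.minimalPeriod f p = n := by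
  have hp : Function.IsPeriodicPt f n p := h
  rcases hn.eq_one_or_self_of_dvd _ hp.minimalPeriod_dvd with h' | h'
  · exact absurd (Function.minimalPeriod_eq_one_iff_isFixedPt.mp h') h1
  · exact h'

/-- For `-3/4 < b < 0` and `F = F_{-1,b}`: the point `(-b-2, -1)` is periodic of
minimal period 5, and if moreover `-1/8 ≤ b` then `(b, -1)` is periodic of minimal
period 7. -/
theorem minimal_periods_case_c (b : ℝ) (hb1 : -3/4 < b) (hb2 : b < 0) :
    Function.minimalPeriod (F (-1) b) (-b-2, -1) = 5 ∧
    (-1/8 ≤ b → Function.minimalPeriod (F (-1) b) (b, -1) = 7) := by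
  constructor
  · have h0 : F (-1) b (-b-2, -1) = (b+2, -3) := by
      simp only [F]
      rw [abs_of_neg (by linarith : (-b-2:ℝ) < 0), abs_of_neg (by norm_num : (-1:ℝ) < 0)]
      rw [Prod.mk.injEq]; exact ⟨by ring, by ring⟩
    have h1 : F (-1) b (b+2, -3) = (b+4, 2*b-1) := by
      simp only [F]
      rw [abs_of_pos (by linarith : (0:ℝ) < b+2), abs_of_neg (by norm_num : (-3:ℝ) < 0)]
      rw [Prod.mk.injEq]; exact ⟨by ring, by ring⟩
    have h2 : F (-1) b (b+4, 2*b-1) = (4-b, 4*b+3) := by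
      simp only [F]
      rw [abs_of_pos (by linarith : (0:ℝ) < b+4), abs_of_neg (by linarith : 2*b-1 < 0)]
      rw [Prod.mk.injEq]; exact ⟨by ring, by ring⟩
    have h3 : F (-1) b (4-b, 4*b+3) = (-5*b, 1-4*b) := by
      simp only [F]
      rw [abs_of_pos (by linarith : (0:ℝ) < 4-b), abs_of_pos (by linarith : (0:ℝ) < 4*b+3)]
      rw [Prod.mk.injEq]; exact ⟨by ring, by ring⟩
    have h4 : F (-1) b (-5*b, 1-4*b) = (-b-2, -1) := by
      simp only [F]
      rw [abs_of_pos (by linarith : (0:ℝ) < -5*b), abs_of_pos (by linarith : (0:ℝ) < 1-4*b)]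
      rw [Prod.mk.injEq]; exact ⟨by ring, by ring⟩
    apply minPeriod_prime (by norm_num)
    · show (F (-1) b)^[5] (-b-2, -1) = (-b-2, -1)
      simp only [Function.iterate_succ_apply, Function.iterate_zero_apply, h0, h1, h2, h3, h4]
    · rw [h0]
      intro h
      have := congrArg Prod.snd h
      simp at this
  · intro hb3
    have h0 : F (-1) b (b, -1) = (-b, 2*b-1) := by
      simp only [F]
      rw [abs_of_neg hb2, abs_of_neg (by norm_num : (-1:ℝ) < 0)]
      rw [Prod.mk.injEq]; exact ⟨by ring, by ring⟩
    have h1 : F (-1) b (-b, 2*b-1) = (-3*b, 2*b-1) := by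
      simp only [F]
      rw [abs_of_pos (by linarith : (0:ℝ) < -b), abs_of_neg (by linarith : 2*b-1 < 0)]
      rw [Prod.mk.injEq]; exact ⟨by ring, by ring⟩
    have h2 : F (-1) b (-3*b, 2*b-1) = (-5*b, -1) := by
      simp only [F]
      rw [abs_of_pos (by linarith : (0:ℝ) < -3*b), abs_of_neg (by linarith : 2*b-1 < 0)]
      rw [Prod.mk.injEq]; exact ⟨by ring, by ring⟩
    have h3 : F (-1) b (-5*b, -1) = (-5*b, -4*b-1) := by
      simp only [F]
      rw [abs_of_pos (by linarith : (0:ℝ) < -5*b), abs_of_neg (by norm_num : (-1:ℝ) < 0)]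
      rw [Prod.mk.injEq]; exact ⟨by ring, by ring⟩
    have h4 : F (-1) b (-5*b, -4*b-1) = (-b, -8*b-1) := by
      simp only [F]
      rw [abs_of_pos (by linarith : (0:ℝ) < -5*b), abs_of_neg (by linarith : -4*b-1 < 0)]
      rw [Prod.mk.injEq]; exact ⟨by ring, by ring⟩
    have h5 : F (-1) b (-b, -8*b-1) = (7*b, -8*b-1) := by
      simp only [F]
      rw [abs_of_pos (by linarith : (0:ℝ) < -b), abs_of_nonpos (by linarith : -8*b-1 ≤ 0)]
      rw [Prod.mk.injEq]; exact ⟨by ring, by ring⟩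
    have h6 : F (-1) b (7*b, -8*b-1) = (b, -1) := by
      simp only [F]
      rw [abs_of_neg (by linarith : 7*b < 0), abs_of_nonpos (by linarith : -8*b-1 ≤ 0)]
      rw [Prod.mk.injEq]; exact ⟨by ring, by ring⟩
    apply minPeriod_prime (by norm_num)
    · show (F (-1) b)^[7] (b, -1) = (b, -1)
      simp only [Function.iterate_succ_apply, Function.iterate_zero_apply,
        h0, h1, h2, h3, h4, h5, h6]
    · rw [h0]
      intro h
      have := congrArg Prod.snd h
      simp at this
      linarith
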